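/- For η > 0 and ψ ∈ ℝ, (cosh η − cos ψ)·log(cosh η − cos ψ) = (1 + η − log 2)·cosh η − sinh η + cos ψ·(log 2 − 1 − η − (1/2)e^{−2η}) + 2·Σ_{n=2}^∞ [e^{−nη}·cos(nψ)/(n(n²−1))]·(cosh η + n·sinh η), where the series converges absolutely. -/

import Mathlib

open Real Complex in
lemma aux_hasSum_log (η ψ : ℝ) (hη : 0 < η) :
    HasSum (fun n : ℕ => Real.exp (-η) ^ n * Real.cos (n * ψ) / n)
      ((η - Real.log 2 - Real.log (Real.cosh η - Real.cos ψ)) / 2) := by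
  set r := Real.exp (-η) with hrdef
  have hr0 : 0 < r := Real.exp_pos _
  have hr1 : r < 1 := by rw [hrdef, Real.exp_lt_one_iff]; linarith
  have hD : 0 < Real.cosh η - Real.cos ψ := by
    have h1 := Real.cos_le_one ψ
    have h2 := Real.one_lt_cosh.mpr (ne_of_gt hη)
    linarith
  set w : ℂ := (-η : ℝ) + ψ * Complex.I with hw
  have hwre : w.re = -η := by simp [hw]
  have hwim : w.im = ψ := by simp [hw]
  have hz : ‖Complex.exp w‖ < 1 := by
    rw [Complex.norm_exp, hwre]
    exact hr1
  have hsum := Complex.hasSum_re (Complex.hasSum_taylorSeries_neg_log hz)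
  have hterm : ∀ n : ℕ, ((Complex.exp w) ^ n / (n : ℂ)).re = r ^ n * Real.cos (n * ψ) / n := by
    intro n
    rw [← Complex.exp_nat_mul, Complex.div_natCast_re, Complex.exp_re]
    have h1 : ((n : ℂ) * w).re = (n : ℝ) * (-η) := by simp [hwre]
    have h2 : ((n : ℂ) * w).im = (n : ℝ) * ψ := by simp [hwim]
    rw [h1, h2, Real.exp_nat_mul]
  have hval : (-Complex.log (1 - Complex.exp w)).re
      = (η - Real.log 2 - Real.log (Real.cosh η - Real.cos ψ)) / 2 := by
    rw [Complex.neg_re, Complex.log_re]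
    have hre : (1 - Complex.exp w).re = 1 - r * Real.cos ψ := by
      rw [Complex.sub_re, Complex.exp_re, hwre, hwim]; simp [hrdef]
    have him : (1 - Complex.exp w).im = -(r * Real.sin ψ) := by
      rw [Complex.sub_im, Complex.exp_im, hwre, hwim]; simp [hrdef]
    have hnormSq : Complex.normSq (1 - Complex.exp w) = 2 * r * (Real.cosh η - Real.cos ψ) := by
      rw [Complex.normSq_apply, hre, him]
      have hcosh : 2 * r * Real.cosh η = 1 + r ^ 2 := by
        rw [Real.cosh_eq, hrdef]
        have h1 : Real.exp (-η) * Real.exp η = 1 := by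
          rw [← Real.exp_add]; simp
        nlinarith [h1]
      have hpyth := Real.sin_sq_add_cos_sq ψ
      nlinarith [hpyth]
    have habs2 : (‖1 - Complex.exp w‖) ^ 2
        = 2 * r * (Real.cosh η - Real.cos ψ) := by
      rw [Complex.sq_norm]; exact hnormSq
    have habspos : 0 < ‖1 - Complex.exp w‖ := by
      have h2 : (0:ℝ) < 2 * r * (Real.cosh η - Real.cos ψ) := by positivity
      rw [← habs2] at h2
      nlinarith [norm_nonneg (1 - Complex.exp w)]
    have : Real.log ‖1 - Complex.exp w‖
        = Real.log (2 * r * (Real.cosh η - Real.cos ψ)) / 2 := by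
      rw [← habs2, Real.log_pow]
      push_cast
      ring
    rw [this, Real.log_mul (by positivity) (ne_of_gt hD), Real.log_mul (by norm_num) (ne_of_gt hr0),
      hrdef, Real.log_exp]
    ring
  rw [← hval]
  have : (fun n : ℕ => r ^ n * Real.cos (n * ψ) / n) = fun n : ℕ => ((Complex.exp w) ^ n / (n : ℂ)).re := funext fun n => (hterm n).symm
  rw [this]
  exact hsum

theorem cosh_sub_cos_mul_log_fourier (η ψ : ℝ) (hη : 0 < η) :
    (Summable fun n : ℕ =>
      |Real.exp (-((n : ℝ) + 2) * η) * Real.cos (((n : ℝ) + 2) * ψ) /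
          (((n : ℝ) + 2) * (((n : ℝ) + 2) ^ 2 - 1)) *
        (Real.cosh η + ((n : ℝ) + 2) * Real.sinh η)|) ∧
    (Real.cosh η - Real.cos ψ) * Real.log (Real.cosh η - Real.cos ψ) =
      (1 + η - Real.log 2) * Real.cosh η - Real.sinh η +
        Real.cos ψ * (Real.log 2 - 1 - η - (1 / 2) * Real.exp (-2 * η)) +
        2 * ∑' n : ℕ,
          Real.exp (-((n : ℝ) + 2) * η) * Real.cos (((n : ℝ) + 2) * ψ) /
              (((n : ℝ) + 2) * (((n : ℝ) + 2) ^ 2 - 1)) *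
            (Real.cosh η + ((n : ℝ) + 2) * Real.sinh η) := by
  have hrdef : Real.exp (-η) = Real.exp (-η) := rfl
  set r := Real.exp (-η) with hrdef
  have hr0 : 0 < r := Real.exp_pos _
  have hr1 : r < 1 := by rw [hrdef, Real.exp_lt_one_iff]; linarith
  have hre : Real.exp η * r = 1 := by rw [hrdef, ← Real.exp_add]; simp
  set a : ℕ → ℝ := fun n => r ^ n * Real.cos (n * ψ) with ha
  have habound : ∀ n, |a n| ≤ r ^ n := by
    intro n
    rw [ha]
    simp only
    rw [abs_mul, abs_pow, abs_of_pos hr0]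
    have h1 := Real.abs_cos_le_one ((n : ℝ) * ψ)
    nlinarith [pow_pos hr0 n]
  have hgeom : Summable (fun n : ℕ => r ^ n) := summable_geometric_of_lt_one hr0.le hr1
  have hfull := aux_hasSum_log η ψ hη
  rw [← hrdef] at hfull
  set S := (η - Real.log 2 - Real.log (Real.cosh η - Real.cos ψ)) / 2 with hSdef
  have hS1 : HasSum (fun n : ℕ => a (n + 1) / ((n : ℝ) + 1)) S := by
    have h := (hasSum_nat_add_iff' (f := fun n : ℕ => a n / n) 1).mpr hfull
    simp only [Finset.range_one, Finset.sum_singleton, Nat.cast_zero, div_zero, sub_zero,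
      Nat.cast_add, Nat.cast_one] at h
    exact h
  set p : ℕ → ℝ := fun n => Real.exp η * a (n + 2) / ((n : ℝ) + 1) with hp
  set q : ℕ → ℝ := fun n => r * a n / ((n : ℝ) + 1) with hq
  have hpsum : Summable p := by
    refine Summable.of_norm_bounded hgeom ?_
    intro n
    rw [hp]
    simp only [Real.norm_eq_abs]
    rw [abs_div, abs_mul, abs_of_pos (Real.exp_pos η), abs_of_pos (by positivity : (0:ℝ) < (n:ℝ)+1)]
    have h1 := habound (n + 2)
    have h2 : Real.exp η * r ^ (n + 2) = r ^ (n + 1) := by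
      rw [pow_succ, pow_succ, ← mul_assoc]
      calc Real.exp η * (r ^ n * r) * r = (Real.exp η * r) * (r ^ n * r) := by ring
        _ = r ^ n * r := by rw [hre, one_mul]
    have h3 : (1:ℝ) ≤ (n:ℝ) + 1 := by linarith [Nat.cast_nonneg (α := ℝ) n]
    have h4 : 0 ≤ |a (n + 2)| := abs_nonneg _
    have h5 : Real.exp η * |a (n + 2)| ≤ r ^ (n + 1) := by
      calc Real.exp η * |a (n + 2)| ≤ Real.exp η * r ^ (n + 2) := by
            nlinarith [Real.exp_pos η]
        _ = r ^ (n + 1) := h2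
    have h6 : r ^ (n + 1) ≤ r ^ n := by
      rw [pow_succ]
      nlinarith [pow_pos hr0 n]
    calc Real.exp η * |a (n + 2)| / ((n:ℝ) + 1) ≤ Real.exp η * |a (n + 2)| :=
          div_le_self (mul_nonneg (Real.exp_pos η).le (abs_nonneg _)) h3
      _ ≤ r ^ n := le_trans h5 h6
  have hqsum : Summable q := by
    refine Summable.of_norm_bounded hgeom ?_
    intro n
    rw [hq]
    simp only [Real.norm_eq_abs]
    rw [abs_div, abs_mul, abs_of_pos hr0, abs_of_pos (by positivity : (0:ℝ) < (n:ℝ)+1)]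
    have h1 := habound n
    have h3 : (1:ℝ) ≤ (n:ℝ) + 1 := by linarith [Nat.cast_nonneg (α := ℝ) n]
    calc r * |a n| / ((n:ℝ) + 1) ≤ r * |a n| :=
          div_le_self (mul_nonneg hr0.le (abs_nonneg _)) h3
      _ ≤ r ^ n := by nlinarith [pow_pos hr0 n, abs_nonneg (a n)]
  have hkey : ∀ n : ℕ, p n + q n = 2 * Real.cos ψ * (a (n + 1) / ((n : ℝ) + 1)) := by
    intro n
    rw [hp, hq, ha]
    simp only
    push_cast
    have hcc : Real.cos (((n:ℝ) + 2) * ψ) + Real.cos ((n:ℝ) * ψ)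
        = 2 * Real.cos (((n:ℝ) + 1) * ψ) * Real.cos ψ := by
      rw [Real.cos_add_cos]
      ring_nf
    have h2 : Real.exp η * r ^ (n + 2) = r ^ (n + 1) := by
      calc Real.exp η * r ^ (n + 2) = (Real.exp η * r) * r ^ (n + 1) := by ring
        _ = r ^ (n + 1) := by rw [hre, one_mul]
    have hne : ((n:ℝ) + 1) ≠ 0 := by positivity
    field_simp
    linear_combination (norm := ring_nf) Real.cos (((n:ℝ) + 2) * ψ) * h2 + r ^ (n + 1) * hcc
  have hc : HasSum (fun n => p n + q n) (2 * Real.cos ψ * S) := by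
    have h := hS1.mul_left (2 * Real.cos ψ)
    have heq : (fun n => p n + q n) = fun n : ℕ => 2 * Real.cos ψ * (a (n + 1) / ((n:ℝ) + 1)) :=
      funext hkey
    rw [heq]
    exact h
  have hPQ : (∑' n, p n) + (∑' n, q n) = 2 * Real.cos ψ * S :=
    (hpsum.hasSum.add hqsum.hasSum).unique hc
  have hq2 : HasSum (fun n : ℕ => q (n + 2)) ((∑' n, q n) - (q 0 + q 1)) := by
    have h := (hasSum_nat_add_iff' (f := q) 2).mpr hqsum.hasSum
    have hsum2 : ∑ i ∈ Finset.range 2, q i = q 0 + q 1 := by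
      simp [Finset.sum_range_succ]
    rwa [hsum2] at h
  have hS2 : HasSum (fun n : ℕ => a (n + 2) / ((n : ℝ) + 2)) (S - a 1) := by
    have h := (hasSum_nat_add_iff' (f := fun n : ℕ => a (n + 1) / ((n : ℝ) + 1)) 1).mpr hS1
    simp only [Finset.range_one, Finset.sum_singleton, Nat.cast_zero, Nat.cast_add,
      Nat.cast_one] at h
    have heq : (fun n : ℕ => a (n + 1 + 1) / ((n : ℝ) + 1 + 1))
        = fun n : ℕ => a (n + 2) / ((n : ℝ) + 2) := by
      funext n
      have h12 : n + 1 + 1 = n + 2 := by omega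
      rw [h12]
      ring_nf
    rw [heq] at h
    rw [show S - a 1 = S - a (0 + 1) / (0 + 1) by norm_num]
    exact h
  set τ : ℕ → ℝ := fun n : ℕ =>
    Real.exp (-((n : ℝ) + 2) * η) * Real.cos (((n : ℝ) + 2) * ψ) /
        (((n : ℝ) + 2) * (((n : ℝ) + 2) ^ 2 - 1)) *
      (Real.cosh η + ((n : ℝ) + 2) * Real.sinh η) with hτdef
  have hτpt : ∀ n : ℕ, τ n
      = (1/2) * (p n + q (n + 2) - 2 * Real.cosh η * (a (n + 2) / ((n : ℝ) + 2))) := by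
    intro n
    rw [hτdef, hp, hq, ha]
    simp only
    have hexp : Real.exp (-((n : ℝ) + 2) * η) = r ^ (n + 2) := by
      rw [hrdef, ← Real.exp_nat_mul]
      congr 1
      push_cast
      ring
    push_cast
    rw [hexp, Real.cosh_eq, Real.sinh_eq, ← hrdef]
    have h1 : ((n:ℝ) + 1) ≠ 0 := by positivity
    have h2 : ((n:ℝ) + 2) ≠ 0 := by positivity
    have h3 : ((n:ℝ) + 3) ≠ 0 := by positivity
    have h4 : ((n:ℝ) + 2) ^ 2 - 1 ≠ 0 := by nlinarith [Nat.cast_nonneg (α := ℝ) n]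
    field_simp
    ring
  have hτ : HasSum τ ((1/2) * ((∑' n, p n) + ((∑' n, q n) - (q 0 + q 1))
      - 2 * Real.cosh η * (S - a 1))) := by
    have h := ((hpsum.hasSum.add hq2).sub (hS2.mul_left (2 * Real.cosh η))).mul_left (1/2)
    have heq : τ = fun n : ℕ =>
        (1/2) * (p n + q (n + 2) - 2 * Real.cosh η * (a (n + 2) / ((n : ℝ) + 2))) :=
      funext hτpt
    rw [heq]
    exact h
  refine ⟨hτ.summable.abs, ?_⟩
  rw [hτ.tsum_eq]
  have hq0 : q 0 = r := by rw [hq, ha]; norm_num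
  have hq1 : q 1 = r * (r * Real.cos ψ) / 2 := by rw [hq, ha]; norm_num
  have ha1 : a 1 = r * Real.cos ψ := by rw [ha]; norm_num
  have hexp2 : Real.exp (-2 * η) = r ^ 2 := by
    rw [hrdef, ← Real.exp_nat_mul]
    congr 1
    push_cast
    ring
  rw [hq0, hq1, ha1, hexp2]
  simp only [hSdef, Real.cosh_eq, Real.sinh_eq, ← hrdef] at hPQ ⊢
  linear_combination -hPQ - Real.cos ψ * hre
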